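/- Let V and V′ be finite-dimensional real inner product spaces, let T : V → V′ be a nonzero linear map, and let W ⊆ V be a subspace such that T restricted to W is surjective onto V′. Set ν := inf{‖Tw‖ : w ∈ W, w ⊥ (W ∩ ker T), ‖w‖ = 1} (the reciprocal of the minimal norm of a right inverse of T|_W). Then for every unit vector v ∈ ker T with v ⊥ (W ∩ ker T) and every unit vector w ∈ W with w ⊥ (W ∩ ker T), one has arccos |⟨v, w⟩| ≥ ν / ‖T‖, where ‖T‖ is the operator norm; in other words, the minimal angle between W and ker T is at least ν(T|_W)/‖T‖. -/

import Mathlib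

/- For a nonzero linear map `T : V → V'` whose restriction to a subspace `W` is
surjective, set `ν := inf{‖Tw‖ : w ∈ W, w ⊥ (W ∩ ker T), ‖w‖ = 1}` (the reciprocal of
the minimal norm of a right inverse of `T|_W`). Then for all unit vectors
`v ∈ ker T` and `w ∈ W`, both orthogonal to `W ∩ ker T`, the angle
`arccos |⟨v,w⟩|` is at least `ν/‖T‖`; i.e. the minimal angle between `W` and
`ker T` is at least `ν(T|_W)/‖T‖`. -/
theorem stmt17 {V V' : Type*}
    [NormedAddCommGroup V] [InnerProductSpace ℝ V] [FiniteDimensional ℝ V]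
    [NormedAddCommGroup V'] [InnerProductSpace ℝ V'] [FiniteDimensional ℝ V']
    (T : V →L[ℝ] V') (hT : T ≠ 0) (W : Submodule ℝ V)
    (hsurj : ∀ y : V', ∃ x ∈ W, T x = y) :
    ∀ v w : V, v ∈ LinearMap.ker (T : V →ₗ[ℝ] V') → w ∈ W → ‖v‖ = 1 → ‖w‖ = 1 →
      v ∈ (W ⊓ LinearMap.ker (T : V →ₗ[ℝ] V'))ᗮ → w ∈ (W ⊓ LinearMap.ker (T : V →ₗ[ℝ] V'))ᗮ →
      sInf {r : ℝ | ∃ u : V, u ∈ W ∧ u ∈ (W ⊓ LinearMap.ker (T : V →ₗ[ℝ] V'))ᗮ ∧ ‖u‖ = 1 ∧ r = ‖T u‖}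
          / ‖T‖
        ≤ Real.arccos |(inner ℝ v w : ℝ)| := by
  intro v w hv hw hnv hnw hvperp hwperp
  set a : ℝ := inner ℝ v w with ha
  have hTpos : (0:ℝ) < ‖T‖ := norm_pos_iff.mpr hT
  -- sInf ≤ ‖T w‖
  have hmem : ‖T w‖ ∈ {r : ℝ | ∃ u : V, u ∈ W ∧ u ∈ (W ⊓ LinearMap.ker (T : V →ₗ[ℝ] V'))ᗮ ∧ ‖u‖ = 1 ∧ r = ‖T u‖} :=
    ⟨w, hw, hwperp, hnw, rfl⟩
  have hbdd : ∀ r ∈ {r : ℝ | ∃ u : V, u ∈ W ∧ u ∈ (W ⊓ LinearMap.ker (T : V →ₗ[ℝ] V'))ᗮ ∧ ‖u‖ = 1 ∧ r = ‖T u‖}, (0:ℝ) ≤ r := by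
    rintro r ⟨u, -, -, -, rfl⟩; exact norm_nonneg _
  have hinf : sInf {r : ℝ | ∃ u : V, u ∈ W ∧ u ∈ (W ⊓ LinearMap.ker (T : V →ₗ[ℝ] V'))ᗮ ∧ ‖u‖ = 1 ∧ r = ‖T u‖} ≤ ‖T w‖ :=
    csInf_le ⟨0, hbdd⟩ hmem
  -- norm of w - a • v
  have hTv : T v = 0 := hv
  have hTw : T w = T (w - a • v) := by
    simp [map_sub, map_smul, hTv]
  have hnorm_sq : ‖w - a • v‖ ^ 2 = 1 - a ^ 2 := by
    have h := @norm_sub_sq_real V _ _ w (a • v)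
    have hwv : (inner ℝ w (a • v) : ℝ) = a * a := by
      rw [inner_smul_right, real_inner_comm]
    rw [h, hwv, norm_smul, hnv, hnw]
    simp [abs_mul_abs_self]
    ring
  have ha1 : |a| ≤ 1 := by
    have := abs_real_inner_le_norm v w
    rwa [hnv, hnw, one_mul] at this
  have hnorm : ‖w - a • v‖ = Real.sqrt (1 - |a| ^ 2) := by
    rw [sq_abs]
    rw [← hnorm_sq]
    exact (Real.sqrt_sq (norm_nonneg _)).symm
  have hTw_le : ‖T w‖ ≤ ‖T‖ * Real.sqrt (1 - |a| ^ 2) := by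
    rw [hTw, ← hnorm]
    exact T.le_opNorm _
  have hsin : Real.sqrt (1 - |a| ^ 2) = Real.sin (Real.arccos |a|) :=
    (Real.sin_arccos |a|).symm
  have hsinle : Real.sin (Real.arccos |a|) ≤ Real.arccos |a| :=
    Real.sin_le (Real.arccos_nonneg _)
  have : ‖T w‖ ≤ ‖T‖ * Real.arccos |a| := by
    calc ‖T w‖ ≤ ‖T‖ * Real.sqrt (1 - |a| ^ 2) := hTw_le
    _ = ‖T‖ * Real.sin (Real.arccos |a|) := by rw [hsin]
    _ ≤ ‖T‖ * Real.arccos |a| := by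
        exact mul_le_mul_of_nonneg_left hsinle (norm_nonneg _)
  rw [div_le_iff₀ hTpos]
  calc sInf _ ≤ ‖T w‖ := hinf
  _ ≤ ‖T‖ * Real.arccos |a| := this
  _ = Real.arccos |a| * ‖T‖ := mul_comm _ _
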